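/- Let β = (β_0,...,β_{2k}) ∈ ℝ^{2k+1} with β_0 > 0. Then there exists a positive Borel measure μ on ℝ with β_i = ∫ x^i dμ for i = 0,...,2k if and only if β is positively recursively generated. -/

import Mathlib

open Matrix MeasureTheory

noncomputable section

/-- The `(k+1) × (k+1)` Hankel matrix `A_v = (v_{i+j})_{i,j=0}^k`. -/
def hankel (k : ℕ) (v : ℕ → ℝ) : Matrix (Fin (k+1)) (Fin (k+1)) ℝ :=
  Matrix.of fun i j => v (i.1 + j.1)

/-- The top-left `r × r` corner `A_v(r-1) = (v_{i+j})_{i,j=0}^{r-1}`. -/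
def hcorner (v : ℕ → ℝ) (r : ℕ) : Matrix (Fin r) (Fin r) ℝ :=
  Matrix.of fun i j => v (i.1 + j.1)

/-- The `(j+1)`-th column of the Hankel matrix `A_v`. -/
def hcol (k : ℕ) (v : ℕ → ℝ) (j : ℕ) : Fin (k+1) → ℝ :=
  fun i => v (i.1 + j)

/-- `r = rank v`: column `v_r` lies in the span of the preceding columns, and `r`
is minimal with this property. -/
def seqRank (k : ℕ) (v : ℕ → ℝ) (r : ℕ) : Prop :=
  hcol k v r ∈ Submodule.span ℝ (hcol k v '' {j | j < r}) ∧
  ∀ i < r, hcol k v i ∉ Submodule.span ℝ (hcol k v '' {j | j < i})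

/-- `φ = A_v(r-1)⁻¹ (v_r,…,v_{2r-1})ᵀ`. -/
def phi (v : ℕ → ℝ) (r : ℕ) : Fin r → ℝ :=
  (hcorner v r)⁻¹.mulVec fun i => v (r + i.1)

/-- `v` is positively recursively generated. -/
def PRG (k : ℕ) (v : ℕ → ℝ) : Prop :=
  (hankel k v).PosDef ∨
  ∃ r, r ≤ k ∧ seqRank k v r ∧ (hcorner v r).PosDef ∧
    ∀ j, r ≤ j → j ≤ 2*k → v j = ∑ i : Fin r, phi v r i * v (j - r + i.1)

namespace CF

/-- polynomial function from coefficient vector -/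
def pf {n : ℕ} (c : Fin n → ℝ) (x : ℝ) : ℝ := ∑ i : Fin n, c i * x ^ (i : ℕ)


variable {k : ℕ} {β : ℕ → ℝ}

lemma span_of_rel {n : ℕ} (c : Fin n → ℝ) (hc : c ≠ 0)
    (hz : ∀ m : Fin (k+1), ∑ i : Fin n, c i * β (↑m + ↑i) = 0) :
    ∃ ℓ < n, hcol k β ℓ ∈ Submodule.span ℝ (hcol k β '' {j | j < ℓ}) := by
  classical
  set c' : ℕ → ℝ := fun i => if h : i < n then c ⟨i, h⟩ else 0 with hc'
  obtain ⟨i0, hi0⟩ : ∃ i : Fin n, c i ≠ 0 := Function.ne_iff.1 hc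
  have hex : c' (i0 : ℕ) ≠ 0 := by simpa [hc', i0.2] using hi0
  set ℓ := Nat.findGreatest (fun i => c' i ≠ 0) n with hℓ
  have hPl : c' ℓ ≠ 0 :=
    Nat.findGreatest_spec (P := fun i => c' i ≠ 0) (le_of_lt i0.2) hex
  have hln : ℓ < n := by
    rcases lt_or_eq_of_le (Nat.findGreatest_le n : ℓ ≤ n) with h | h
    · exact h
    · exfalso; apply hPl; rw [hℓ, h]; simp [hc']
  have hgt : ∀ i, ℓ < i → c' i = 0 := by
    intro i hi
    by_cases hin : i ≤ n
    · by_contra hne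
      exact (Nat.findGreatest_is_greatest (P := fun i => c' i ≠ 0) hi hin) hne
    · have : ¬ i < n := by omega
      simp [hc', this]
  have hrow : ∀ m : Fin (k+1),
      β (↑m + ℓ) = ∑ i ∈ Finset.range ℓ, (-(c' ℓ)⁻¹ * c' i) * β (↑m + i) := by
    intro m
    have h0 : ∑ i ∈ Finset.range n, c' i * β (↑m + i) = 0 := by
      rw [← Fin.sum_univ_eq_sum_range (fun i => c' i * β (↑m + i)) n]
      rw [← hz m]
      refine Finset.sum_congr rfl fun i _ => ?_
      simp [hc', i.2]
    have h1 : ∑ i ∈ Finset.range (ℓ+1), c' i * β (↑m + i) = 0 := by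
      rw [← h0]
      refine Finset.sum_subset (Finset.range_subset_range.2 (by omega)) fun i hi hni => ?_
      have : ℓ < i := by
        simp only [Finset.mem_range] at hi hni; omega
      rw [hgt i this, zero_mul]
    rw [Finset.sum_range_succ] at h1
    have hS : ∑ i ∈ Finset.range ℓ, c' i * β (↑m + i) = -(c' ℓ * β (↑m + ℓ)) := by linarith
    have : ∑ i ∈ Finset.range ℓ, (-(c' ℓ)⁻¹ * c' i) * β (↑m + i)
        = -(c' ℓ)⁻¹ * ∑ i ∈ Finset.range ℓ, c' i * β (↑m + i) := by
      rw [Finset.mul_sum]; exact Finset.sum_congr rfl fun i _ => by ring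
    rw [this, hS]
    field_simp
  refine ⟨ℓ, hln, ?_⟩
  have heq : hcol k β ℓ = ∑ i ∈ Finset.range ℓ, (-(c' ℓ)⁻¹ * c' i) • hcol k β i := by
    funext m
    have := hrow m
    simp only [hcol, Finset.sum_apply, Pi.smul_apply, smul_eq_mul]
    exact this
  rw [heq]
  exact Submodule.sum_mem _ fun i hi => Submodule.smul_mem _ _
    (Submodule.subset_span ⟨i, Finset.mem_range.1 hi, rfl⟩)

lemma construct (k r : ℕ) (hr : 0 < r) (γ : ℕ → ℝ) (hA : (hcorner γ r).PosDef)
    (hH : ∀ j, r ≤ j → j ≤ 2*k → γ j = ∑ i : Fin r, phi γ r i * γ (j - r + i.1)) :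
    ∃ μ : Measure ℝ, ∀ i ≤ 2*k, Integrable (fun x : ℝ => x ^ i) μ ∧ γ i = ∫ x, x ^ i ∂μ := by
  classical
  set A := hcorner γ r with hAdef
  set φ := phi γ r with hφdef
  have hdet : A.det ≠ 0 := hA.det_pos.ne'
  have hAφ : A *ᵥ φ = fun m : Fin r => γ (r + ↑m) := by
    rw [hφdef, phi, Matrix.mulVec_mulVec, Matrix.mul_nonsing_inv _ hdet.isUnit,
      Matrix.one_mulVec]
  set i0 : Fin r := ⟨0, hr⟩ with hi0
  set e0 : Fin r → ℝ := Pi.single i0 1 with he0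
  set M : Matrix (Fin r) (Fin r) ℝ :=
    Matrix.of (fun i j => if (j:ℕ)+1 = r then φ i else if (i:ℕ) = (j:ℕ)+1 then 1 else 0)
    with hM
  have hATsym : Aᵀ = A := by
    ext i j; simp [hAdef, hcorner, add_comm]
  have hAM : A * M = Matrix.of (fun i j : Fin r => γ (↑i + ↑j + 1)) := by
    ext i j
    by_cases hj : (j:ℕ)+1 = r
    · have hcol : ∀ l : Fin r, M l j = φ l := fun l => by simp [hM, hj]
      rw [Matrix.mul_apply]
      simp_rw [hcol]
      have := congrFun hAφ i
      rw [Matrix.mulVec, dotProduct] at this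
      rw [Matrix.of_apply, this]
      congr 1
      omega
    · have hjr : (j:ℕ)+1 < r := lt_of_le_of_ne j.2 hj
      set j1 : Fin r := ⟨(j:ℕ)+1, hjr⟩ with hj1
      have hcol : ∀ l : Fin r, M l j = if l = j1 then 1 else 0 := by
        intro l
        simp only [hM, Matrix.of_apply, hj, if_false]
        by_cases h : l = j1
        · subst h; simp [hj1]
        · rw [if_neg h, if_neg]
          intro hc
          exact h (Fin.ext (by simpa [hj1] using hc))
      rw [Matrix.mul_apply]
      simp_rw [hcol, mul_ite, mul_one, mul_zero]
      rw [Finset.sum_ite_eq' Finset.univ j1 (fun l => A i l)]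
      simp only [Finset.mem_univ, if_true, Matrix.of_apply]
      rfl
  have hMsymA : Mᵀ * A = A * M := by
    have h1 : (A * M)ᵀ = A * M := by
      rw [hAM]
      ext i j
      simp only [Matrix.transpose_apply, Matrix.of_apply]
      congr 1
      omega
    calc Mᵀ * A = Mᵀ * Aᵀ := by rw [hATsym]
    _ = (A * M)ᵀ := by rw [Matrix.transpose_mul]
    _ = A * M := h1
  -- key induction
  have hu : ∀ j : ℕ, ∀ m : Fin r, (m:ℕ) + j ≤ 2*k → (A *ᵥ ((M^j) *ᵥ e0)) m = γ (↑m + j) := by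
    intro j
    induction j with
    | zero =>
      intro m _
      rw [pow_zero, Matrix.one_mulVec, he0, Matrix.mulVec_single]
      simp [hAdef, hcorner, hi0]
    | succ j ih =>
      intro m hm
      have step : A *ᵥ ((M^(j+1)) *ᵥ e0) = Mᵀ *ᵥ (A *ᵥ ((M^j) *ᵥ e0)) := by
        rw [pow_succ', Matrix.mulVec_mulVec, Matrix.mulVec_mulVec, ← Matrix.mul_assoc,
          ← hMsymA, Matrix.mul_assoc, ← Matrix.mulVec_mulVec, ← Matrix.mulVec_mulVec,
          Matrix.mulVec_mulVec]
      rw [step]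
      rw [Matrix.mulVec, dotProduct]
      simp only [Matrix.transpose_apply]
      by_cases hmr : (m:ℕ)+1 = r
      · have hcol : ∀ l : Fin r, M l m = φ l := fun l => by simp [hM, hmr]
        simp_rw [hcol]
        have hl : ∀ l : Fin r, (A *ᵥ ((M^j) *ᵥ e0)) l = γ (↑l + j) := by
          intro l
          exact ih l (by have h1 := l.2; omega)
        simp_rw [hl]
        have hHj : γ (r + j) = ∑ i : Fin r, φ i * γ (j + ↑i) := by
          have := hH (r + j) (by omega) (by omega)
          rw [show r + j - r = j by omega] at this
          exact this
        rw [show ∑ l : Fin r, φ l * γ (↑l + j) = ∑ l : Fin r, φ l * γ (j + ↑l) from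
          Finset.sum_congr rfl fun l _ => by rw [add_comm (l:ℕ) j]]
        rw [← hHj]
        congr 1
        omega
      · have hm1 : (m:ℕ)+1 < r := lt_of_le_of_ne m.2 hmr
        set m1 : Fin r := ⟨(m:ℕ)+1, hm1⟩ with hm1def
        have hcol : ∀ l : Fin r, M l m = if l = m1 then 1 else 0 := by
          intro l
          simp only [hM, Matrix.of_apply, hmr, if_false]
          by_cases h : l = m1
          · subst h; simp [hm1def]
          · rw [if_neg h, if_neg]
            intro hc
            exact h (Fin.ext (by simpa [hm1def] using hc))
        simp_rw [hcol, ite_mul, one_mul, zero_mul]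
        rw [Finset.sum_ite_eq' Finset.univ m1 (fun l => (A *ᵥ ((M^j) *ᵥ e0)) l)]
        simp only [Finset.mem_univ, if_true]
        rw [ih m1 (by simp [hm1def]; omega)]
        show γ (↑m + 1 + j) = γ (↑m + (j+1))
        congr 1
        omega
  have hγv : ∀ j, j ≤ 2*k → γ j = e0 ⬝ᵥ (A *ᵥ ((M^j) *ᵥ e0)) := by
    intro j hj
    have := hu j i0 (by simp [hi0]; omega)
    rw [he0, single_dotProduct, one_mul, this]
    simp [hi0]
  -- square root of A
  obtain ⟨S, hSsa, -, hS2⟩ : ∃ S : Matrix (Fin r) (Fin r) ℝ, IsSelfAdjoint S ∧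
      QuasispectrumRestricts S ContinuousMap.realToNNReal ∧ S * S = A := by
    open scoped MatrixOrder in
    exact CFC.exists_sqrt_of_isSelfAdjoint_of_quasispectrumRestricts hA.posSemidef.1
      (QuasispectrumRestricts.nnreal_of_nonneg hA.posSemidef.nonneg)
  have hSH : Sᵀ = S := by
    have h : Sᴴ = S := hSsa
    rwa [Matrix.conjTranspose_eq_transpose_of_trivial] at h
  have hSdet : S.det ≠ 0 := by
    intro h
    have : A.det = 0 := by rw [← hS2, Matrix.det_mul, h, zero_mul]
    exact hdet this
  have hSS : S⁻¹ * S = 1 := Matrix.nonsing_inv_mul _ hSdet.isUnit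
  have hSS' : S * S⁻¹ = 1 := Matrix.mul_nonsing_inv _ hSdet.isUnit
  have hSinvA : S⁻¹ * A = S := by
    rw [← hS2, ← Matrix.mul_assoc, hSS, Matrix.one_mul]
  have hASinv : A * S⁻¹ = S := by
    rw [← hS2, Matrix.mul_assoc, hSS', Matrix.mul_one]
  set T := S * M * S⁻¹ with hTdef
  have hTsym : T.IsHermitian := by
    show Tᴴ = T
    rw [Matrix.conjTranspose_eq_transpose_of_trivial]
    rw [hTdef, Matrix.transpose_mul, Matrix.transpose_mul, Matrix.transpose_nonsing_inv,
      hSH]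
    calc S⁻¹ * (Mᵀ * S) = S⁻¹ * Mᵀ * S := by rw [Matrix.mul_assoc]
    _ = S⁻¹ * Mᵀ * (A * S⁻¹) := by rw [hASinv]
    _ = S⁻¹ * (Mᵀ * A) * S⁻¹ := by simp only [Matrix.mul_assoc]
    _ = S⁻¹ * (A * M) * S⁻¹ := by rw [hMsymA]
    _ = (S⁻¹ * A) * M * S⁻¹ := by simp only [Matrix.mul_assoc]
    _ = S * M * S⁻¹ := by rw [hSinvA]
  have hTpow : ∀ j : ℕ, T^j = S * (M^j) * S⁻¹ := by
    intro j
    induction j with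
    | zero => rw [pow_zero, pow_zero, Matrix.mul_one, hSS']
    | succ j ih =>
      rw [pow_succ, pow_succ, ih, hTdef]
      calc S * M^j * S⁻¹ * (S * M * S⁻¹) = S * M^j * (S⁻¹ * S) * M * S⁻¹ := by
            simp only [Matrix.mul_assoc]
      _ = S * (M^j * M) * S⁻¹ := by rw [hSS]; simp only [Matrix.mul_assoc, Matrix.one_mul]
  set v := S *ᵥ e0 with hvdef
  have hvT : ∀ j, j ≤ 2*k → γ j = v ⬝ᵥ ((T^j) *ᵥ v) := by
    intro j hj
    have h0 : (S * (M^j) * S⁻¹) * S = S * (M^j) := by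
      rw [Matrix.mul_assoc, hSS, Matrix.mul_one]
    have h1 : (S * (M^j) * S⁻¹) *ᵥ v = S *ᵥ ((M^j) *ᵥ e0) := by
      show (S * (M^j) * S⁻¹) *ᵥ (S *ᵥ e0) = _
      rw [Matrix.mulVec_mulVec, h0, ← Matrix.mulVec_mulVec]
    have h2 : v ᵥ* S = A *ᵥ e0 := by
      rw [← hSH, Matrix.vecMul_transpose]
      show S *ᵥ (S *ᵥ e0) = _
      rw [Matrix.mulVec_mulVec, hS2]
    have h3 : v ⬝ᵥ ((T^j) *ᵥ v) = e0 ⬝ᵥ (A *ᵥ ((M^j) *ᵥ e0)) :=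
      calc v ⬝ᵥ ((T^j) *ᵥ v) = v ⬝ᵥ (S *ᵥ ((M^j) *ᵥ e0)) := by rw [hTpow, h1]
      _ = (v ᵥ* S) ⬝ᵥ ((M^j) *ᵥ e0) := by rw [Matrix.dotProduct_mulVec]
      _ = (A *ᵥ e0) ⬝ᵥ ((M^j) *ᵥ e0) := by rw [h2]
      _ = (e0 ᵥ* A) ⬝ᵥ ((M^j) *ᵥ e0) := by rw [← Matrix.vecMul_transpose, hATsym]
      _ = e0 ⬝ᵥ (A *ᵥ ((M^j) *ᵥ e0)) := (Matrix.dotProduct_mulVec _ _ _).symm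
    rw [hγv j hj, h3]
  -- spectral decomposition
  set ev := hTsym.eigenvalues with hev
  set U : Matrix (Fin r) (Fin r) ℝ := (hTsym.eigenvectorUnitary : Matrix (Fin r) (Fin r) ℝ)
    with hU
  have hspec : T = U * Matrix.diagonal ev * star U := by
    have := hTsym.spectral_theorem
    rwa [show RCLike.ofReal ∘ ev = ev by funext t; simp [RCLike.ofReal]] at this
  have hUstar : star U * U = 1 := by
    rw [hU]
    exact Unitary.coe_star_mul_self hTsym.eigenvectorUnitary
  have hUstar' : U * star U = 1 := by
    rw [hU]
    exact Unitary.coe_mul_star_self hTsym.eigenvectorUnitary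
  have hTj : ∀ j : ℕ, T^j = U * Matrix.diagonal (fun t => ev t ^ j) * star U := by
    intro j
    induction j with
    | zero =>
      rw [pow_zero]
      simp only [pow_zero]
      rw [show (Matrix.diagonal fun _ : Fin r => (1:ℝ)) = 1 from Matrix.diagonal_one]
      rw [Matrix.mul_one, hUstar']
    | succ j ih =>
      rw [pow_succ, ih, hspec]
      calc U * Matrix.diagonal (fun t => ev t ^ j) * star U * (U * Matrix.diagonal ev * star U)
          = U * Matrix.diagonal (fun t => ev t ^ j) * (star U * U) * Matrix.diagonal ev * star U := by
            simp only [Matrix.mul_assoc]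
      _ = U * (Matrix.diagonal (fun t => ev t ^ j) * Matrix.diagonal ev) * star U := by
            rw [hUstar]; simp only [Matrix.mul_assoc, Matrix.mul_one, Matrix.one_mul]
      _ = U * Matrix.diagonal (fun t => ev t ^ (j+1)) * star U := by
            have hdd : Matrix.diagonal (fun t => ev t ^ j) * Matrix.diagonal ev
                = Matrix.diagonal (fun t : Fin r => ev t ^ (j+1)) := by
              rw [Matrix.diagonal_mul_diagonal]
              simp [pow_succ]
            rw [hdd]
  have hUT : star U = Uᵀ := by
    rw [Matrix.star_eq_conjTranspose, Matrix.conjTranspose_eq_transpose_of_trivial]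
  set w := Uᵀ *ᵥ v with hw
  have hsum : ∀ j, j ≤ 2*k → γ j = ∑ t : Fin r, (w t)^2 * (ev t)^j := by
    intro j hj
    rw [hvT j hj, hTj j, hUT]
    rw [← Matrix.mulVec_mulVec, ← Matrix.mulVec_mulVec]
    rw [Matrix.dotProduct_mulVec v U, show v ᵥ* U = Uᵀ *ᵥ v by
      rw [← Matrix.transpose_transpose U, Matrix.vecMul_transpose, Matrix.transpose_transpose]]
    rw [← hw, dotProduct]
    refine Finset.sum_congr rfl fun t _ => ?_
    rw [Matrix.mulVec_diagonal]
    ring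
  -- the measure
  refine ⟨∑ t : Fin r, (ENNReal.ofReal ((w t)^2)) • Measure.dirac (ev t), fun i hi => ?_⟩
  have hdint : ∀ t : Fin r, Integrable (fun x : ℝ => x ^ i) (Measure.dirac (ev t)) := by
    intro t
    refine ⟨(continuous_pow i).aestronglyMeasurable, ?_⟩
    rw [HasFiniteIntegral]
    rw [MeasureTheory.lintegral_dirac]
    exact ENNReal.coe_lt_top
  have hsint : ∀ t : Fin r,
      Integrable (fun x : ℝ => x ^ i) ((ENNReal.ofReal ((w t)^2)) • Measure.dirac (ev t)) :=
    fun t => (hdint t).smul_measure ENNReal.ofReal_ne_top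
  constructor
  · exact (MeasureTheory.integrable_finset_sum_measure).2 fun t _ => hsint t
  · rw [MeasureTheory.integral_finset_sum_measure fun t _ => hsint t]
    have : ∀ t : Fin r, ∫ x, x ^ i ∂((ENNReal.ofReal ((w t)^2)) • Measure.dirac (ev t))
        = (w t)^2 * (ev t)^i := by
      intro t
      rw [MeasureTheory.integral_smul_measure, MeasureTheory.integral_dirac,
        ENNReal.toReal_ofReal (sq_nonneg _), smul_eq_mul]
    simp_rw [this]
    exact hsum i hi

variable {k : ℕ} {β : ℕ → ℝ} {μ : Measure ℝ}
  (hint : ∀ i ≤ 2*k, Integrable (fun x : ℝ => x ^ i) μ ∧ β i = ∫ x, x ^ i ∂μ)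

include hint

lemma pow_mul_pf {n : ℕ} (c : Fin n → ℝ) (m : ℕ) (h : m + n ≤ 2*k+1) :
    Integrable (fun x => x^m * pf c x) μ ∧
      ∫ x, x^m * pf c x ∂μ = ∑ i : Fin n, c i * β (m + i) := by
  have hfun : (fun x : ℝ => x^m * pf c x) = fun x => ∑ i : Fin n, c i * x^(m + (i:ℕ)) := by
    funext x
    rw [pf, Finset.mul_sum]
    refine Finset.sum_congr rfl fun i _ => by rw [pow_add]; ring
  have hi : ∀ i : Fin n, Integrable (fun x : ℝ => c i * x^(m + (i:ℕ))) μ := fun i =>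
    ((hint (m + i) (by omega)).1.const_mul _)
  constructor
  · rw [hfun]; exact integrable_finset_sum _ fun i _ => hi i
  · rw [hfun, integral_finset_sum _ fun i _ => hi i]
    refine Finset.sum_congr rfl fun i _ => ?_
    rw [MeasureTheory.integral_const_mul, ← (hint (m + i) (by omega)).2]

lemma sq_pf {n : ℕ} (hn : n ≤ k+1) (c : Fin n → ℝ) :
    Integrable (fun x => (pf c x)^2) μ ∧
      ∫ x, (pf c x)^2 ∂μ = ∑ i : Fin n, c i * ∑ j : Fin n, c j * β (↑i + ↑j) := by
  have hfun : (fun x : ℝ => (pf c x)^2) = fun x => ∑ i : Fin n, c i * (x^(i:ℕ) * pf c x) := by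
    funext x
    rw [sq, pf, Finset.sum_mul]
    exact Finset.sum_congr rfl fun i _ => by ring
  have hb : ∀ i : Fin n, (i:ℕ) + n ≤ 2*k+1 := fun i => by have := i.2; omega
  have hInt : ∀ i : Fin n, Integrable (fun x : ℝ => c i * (x ^ (i:ℕ) * pf c x)) μ :=
    fun i => ((pow_mul_pf hint c (i:ℕ) (hb i)).1.const_mul _)
  constructor
  · rw [hfun]
    exact integrable_finset_sum _ fun i _ => hInt i
  · rw [hfun, integral_finset_sum _ fun i _ => hInt i]
    refine Finset.sum_congr rfl fun i _ => ?_
    rw [MeasureTheory.integral_const_mul, (pow_mul_pf hint c (i:ℕ) (hb i)).2]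

lemma vanish_of_sq_zero {n : ℕ} (hn : n ≤ k+1) (c : Fin n → ℝ)
    (h0 : ∫ x, (pf c x)^2 ∂μ = 0) :
    ∀ m, m + n ≤ 2*k+1 → ∑ i : Fin n, c i * β (m + i) = 0 := by
  have hpf0 : (fun x => pf c x) =ᵐ[μ] 0 := by
    have h2 := (integral_eq_zero_iff_of_nonneg (fun x => sq_nonneg _) (sq_pf hint hn c).1).1 h0
    filter_upwards [h2] with x hx
    simpa using (pow_eq_zero_iff two_ne_zero).mp hx
  intro m hm
  have h1 := (pow_mul_pf hint c m hm).2
  have h2 : ∫ x, x^m * pf c x ∂μ = 0 := by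
    have : (fun x : ℝ => x^m * pf c x) =ᵐ[μ] 0 := by
      filter_upwards [hpf0] with x hx
      simp [show pf c x = 0 from hx]
    rw [integral_congr_ae this]; simp
  rw [← h1, h2]

lemma quadform {n : ℕ} (hn : n ≤ k+1) (c : Fin n → ℝ) :
    c ⬝ᵥ (hcorner β n) *ᵥ c = ∫ x, (pf c x)^2 ∂μ := by
  rw [(sq_pf hint hn c).2]
  refine Finset.sum_congr rfl fun i _ => ?_
  rw [Matrix.mulVec, dotProduct]
  simp only [hcorner, Matrix.of_apply]
  rw [Finset.mul_sum, Finset.mul_sum]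
  exact Finset.sum_congr rfl fun j _ => by ring


lemma forward
    (hint : ∀ i ≤ 2*k, Integrable (fun x : ℝ => x ^ i) μ ∧ β i = ∫ x, x ^ i ∂μ) :
    PRG k β := by
  classical
  have hherm : (hankel k β).IsHermitian := by
    show _ = _
    ext i j
    simp [hankel, Matrix.conjTranspose_apply, add_comm]
  by_cases hpd : (hankel k β).PosDef
  · exact Or.inl hpd
  right
  have hhc : hankel k β = hcorner β (k+1) := rfl
  have hpsd : ∀ x : Fin (k+1) → ℝ, 0 ≤ x ⬝ᵥ (hankel k β) *ᵥ x := by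
    intro x
    rw [hhc, quadform hint le_rfl x]
    exact integral_nonneg fun t => sq_nonneg _
  obtain ⟨x, hx0, hxq⟩ : ∃ x ≠ 0, x ⬝ᵥ (hankel k β) *ᵥ x = 0 := by
    by_contra h
    push_neg at h
    apply hpd
    refine Matrix.PosDef.of_dotProduct_mulVec_pos hherm fun x hx => ?_
    have h1 : star x = x := by funext i; simp
    rw [h1]
    exact lt_of_le_of_ne (hpsd x) (Ne.symm (h x hx))
  -- rows vanish
  have hxz : ∀ m : Fin (k+1), ∑ i : Fin (k+1), x i * β (↑m + ↑i) = 0 := by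
    have h0 : ∫ t, (pf x t)^2 ∂μ = 0 := by
      rw [← quadform hint le_rfl x, ← hhc, hxq]
    intro m
    exact vanish_of_sq_zero hint le_rfl x h0 m (by omega)
  obtain ⟨ℓ, hℓn, hℓmem⟩ := span_of_rel x hx0 hxz
  have hexP : ∃ nn, hcol k β nn ∈ Submodule.span ℝ (hcol k β '' {j | j < nn}) := ⟨ℓ, hℓmem⟩
  set r := Nat.find hexP with hrdef
  have hPr : hcol k β r ∈ Submodule.span ℝ (hcol k β '' {j | j < r}) := Nat.find_spec hexP
  have hmin : ∀ i < r, hcol k β i ∉ Submodule.span ℝ (hcol k β '' {j | j < i}) :=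
    fun i hi => Nat.find_min hexP hi
  have hrk : r ≤ k := by
    have : r ≤ ℓ := Nat.find_le hℓmem
    omega
  -- column relation
  have himg : hcol k β '' {j | j < r} = Set.range (fun i : Fin r => hcol k β (i : ℕ)) := by
    ext y
    constructor
    · rintro ⟨j, hj, rfl⟩
      exact ⟨⟨j, hj⟩, rfl⟩
    · rintro ⟨i, rfl⟩
      exact ⟨(i : ℕ), i.2, rfl⟩
  obtain ⟨d, hd⟩ : ∃ d : Fin r → ℝ, ∑ i : Fin r, d i • hcol k β (i : ℕ) = hcol k β r := by
    rw [himg] at hPr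
    exact (Submodule.mem_span_range_iff_exists_fun ℝ).1 hPr
  have hdrow : ∀ m : Fin (k+1), ∑ i : Fin r, d i * β (↑m + ↑i) = β (↑m + r) := by
    intro m
    have := congrFun hd m
    simpa [hcol, Finset.sum_apply] using this
  -- coefficients of q = x^r - Σ d_i x^i
  set e : Fin (r+1) → ℝ := fun i => if h : (i : ℕ) < r then -d ⟨i, h⟩ else 1 with he
  have hez : ∀ m : Fin (k+1), ∑ i : Fin (r+1), e i * β (↑m + ↑i) = 0 := by
    intro m
    rw [Fin.sum_univ_castSucc]
    have h1 : ∀ i : Fin r, e (Fin.castSucc i) = -d i := by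
      intro i; simp [he, i.2]
    have h2 : e (Fin.last r) = 1 := by simp [he]
    simp only [h1, h2, Fin.coe_castSucc, Fin.val_last, one_mul]
    have := hdrow m
    rw [show ∑ i : Fin r, -d i * β (↑m + ↑i) = -∑ i : Fin r, d i * β (↑m + ↑i) by
      rw [← Finset.sum_neg_distrib]; exact Finset.sum_congr rfl fun i _ => by ring]
    rw [this]; ring
  have hq0 : ∫ t, (pf e t)^2 ∂μ = 0 := by
    rw [(sq_pf hint (by omega) e).2]
    refine Finset.sum_eq_zero fun i _ => ?_
    have hik : (i : ℕ) < k + 1 := by have := i.2; omega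
    have := hez ⟨(i : ℕ), hik⟩
    rw [show ∑ j : Fin (r+1), e j * β (↑i + ↑j) = 0 from this, mul_zero]
  have hvanish : ∀ m, m + (r+1) ≤ 2*k+1 → ∑ i : Fin (r+1), e i * β (m + ↑i) = 0 :=
    vanish_of_sq_zero hint (by omega) e hq0
  have hsplit : ∀ m, m + r ≤ 2*k → β (m + r) = ∑ i : Fin r, d i * β (m + ↑i) := by
    intro m hm
    have := hvanish m (by omega)
    rw [Fin.sum_univ_castSucc] at this
    have h1 : ∀ i : Fin r, e (Fin.castSucc i) = -d i := by
      intro i; simp [he, i.2]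
    have h2 : e (Fin.last r) = 1 := by simp [he]
    simp only [h1, h2, Fin.coe_castSucc, Fin.val_last, one_mul] at this
    have h3 : ∑ i : Fin r, -d i * β (m + ↑i) = -∑ i : Fin r, d i * β (m + ↑i) := by
      rw [← Finset.sum_neg_distrib]; exact Finset.sum_congr rfl fun i _ => by ring
    rw [h3] at this
    linarith
  -- corner posdef
  have hcherm : (hcorner β r).IsHermitian := by
    show _ = _
    ext i j
    simp [hcorner, Matrix.conjTranspose_apply, add_comm]
  have hcpd : (hcorner β r).PosDef := by
    refine Matrix.PosDef.of_dotProduct_mulVec_pos hcherm fun c hcne => ?_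
    have h1 : star c = c := by funext i; simp
    rw [h1]
    have h2 : 0 ≤ c ⬝ᵥ (hcorner β r) *ᵥ c := by
      rw [quadform hint (by omega) c]
      exact integral_nonneg fun t => sq_nonneg _
    refine lt_of_le_of_ne h2 fun heq => ?_
    have h0 : ∫ t, (pf c t)^2 ∂μ = 0 := by rw [← quadform hint (by omega) c, ← heq]
    have hrows : ∀ m : Fin (k+1), ∑ i : Fin r, c i * β (↑m + ↑i) = 0 := by
      intro m
      exact vanish_of_sq_zero hint (by omega) c h0 m (by omega)
    obtain ⟨ℓ', hℓ'r, hℓ'mem⟩ := span_of_rel c hcne hrows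
    exact hmin ℓ' hℓ'r hℓ'mem
  -- phi = d
  have hdet : (hcorner β r).det ≠ 0 := hcpd.det_pos.ne'
  have hAd : (hcorner β r) *ᵥ d = fun m : Fin r => β (r + ↑m) := by
    funext m
    have := hdrow ⟨(m : ℕ), by omega⟩
    simp only [Matrix.mulVec, dotProduct, hcorner, Matrix.of_apply]
    rw [show (β (r + ↑m)) = β (↑m + r) by rw [add_comm]]
    rw [← this]
    exact Finset.sum_congr rfl fun i _ => by ring
  have hphi : phi β r = d := by
    rw [phi, ← hAd, Matrix.mulVec_mulVec, Matrix.nonsing_inv_mul _ hdet.isUnit, Matrix.one_mulVec]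
  refine ⟨r, hrk, ⟨hPr, hmin⟩, hcpd, fun j h1 h2 => ?_⟩
  rw [hphi]
  have := hsplit (j - r) (by omega)
  rw [show j - r + r = j by omega] at this
  exact this
end CF

theorem stmt7 (k : ℕ) (β : ℕ → ℝ) (hb0 : 0 < β 0) :
    (∃ μ : Measure ℝ, ∀ i ≤ 2*k,
        Integrable (fun x : ℝ => x ^ i) μ ∧ β i = ∫ x, x ^ i ∂μ) ↔
      PRG k β := by
  constructor
  · rintro ⟨μ, hint⟩
    exact CF.forward hint hint
  · rintro (hpd | ⟨r, hrk, hseq, hcpd, hrec⟩)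
    · -- positive definite case
      set γ : ℕ → ℝ := fun j => if j = 2*k+1 then 0 else β j with hγ
      have hγβ : ∀ i, i ≤ 2*k → γ i = β i := by
        intro i hi
        simp only [hγ]
        rw [if_neg (by omega)]
      have hcg : hcorner γ (k+1) = hankel k β := by
        ext i j
        simp only [hcorner, hankel, Matrix.of_apply, hγ]
        rw [if_neg (by have := i.2; have := j.2; omega)]
      have hA : (hcorner γ (k+1)).PosDef := by rw [hcg]; exact hpd
      have hdet : (hcorner γ (k+1)).det ≠ 0 := hA.det_pos.ne'
      have hAφ : (hcorner γ (k+1)) *ᵥ (phi γ (k+1)) = fun m : Fin (k+1) => γ ((k+1) + ↑m) := by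
        rw [phi, Matrix.mulVec_mulVec, Matrix.mul_nonsing_inv _ hdet.isUnit, Matrix.one_mulVec]
      have hH : ∀ j, k+1 ≤ j → j ≤ 2*k →
          γ j = ∑ i : Fin (k+1), phi γ (k+1) i * γ (j - (k+1) + i.1) := by
        intro j h1 h2
        have := congrFun hAφ ⟨j - (k+1), by omega⟩
        rw [Matrix.mulVec, dotProduct] at this
        simp only [hcorner, Matrix.of_apply] at this
        rw [show (k+1) + (j - (k+1)) = j from by omega] at this
        rw [← this]
        exact Finset.sum_congr rfl fun i _ => by ring
      obtain ⟨μ, hμ⟩ := CF.construct k (k+1) (by omega) γ hA hH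
      refine ⟨μ, fun i hi => ?_⟩
      have := hμ i hi
      rwa [hγβ i hi] at this
    · -- recursive case
      have hr0 : 0 < r := by
        by_contra h
        have hr : r = 0 := by omega
        subst hr
        have := hrec 0 le_rfl (by omega)
        simp at this
        linarith
      exact CF.construct k r hr0 β hcpd hrec
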